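/- Let Ξ be a minimal and aperiodic right-infinite subshift over a finite alphabet. If for every n ∈ ℕ the subshift has exactly one right-special word of length n, then Ξ is right-special balanced. -/

import Mathlib

open scoped ENNReal Classical

noncomputable section

namespace Arx1111

variable {A : Type*}

/-! ### Words and infinite words -/

/-- The left shift on right-infinite words. -/
def shift (ξ : ℕ → A) : ℕ → A := fun n => ξ (n + 1)

/-- The finite word `u` occurs in the infinite word `ξ` at position `k`. -/
def FactorAt (u : List A) (ξ : ℕ → A) (k : ℕ) : Prop :=
  u = (List.range u.length).map fun i => ξ (k + i)

/-- `u` is a factor of the infinite word `ξ`. -/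
def IsFactorOf (u : List A) (ξ : ℕ → A) : Prop := ∃ k, FactorAt u ξ k

/-- `u` is a prefix of the infinite word `ξ`. -/
def PrefixOfInf (u : List A) (ξ : ℕ → A) : Prop := FactorAt u ξ 0

/-- `u` is a proper prefix of `v`. -/
def PPrefix (u v : List A) : Prop := u <+: v ∧ u ≠ v

/-- The `n`-th power `u^n` of a finite word `u`. -/
def wordPow (u : List A) : ℕ → List A
  | 0 => []
  | n + 1 => u ++ wordPow u n

/-- The language of a set of infinite words: all finite factors of its elements. -/
def language (Ξ : Set (ℕ → A)) : Set (List A) := {u | ∃ ξ ∈ Ξ, IsFactorOf u ξ}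

/-! ### Subshifts -/

/-- `Ξ` is a (right-infinite) subshift: nonempty, closed, shift-invariant. -/
structure IsSubshift [TopologicalSpace A] (Ξ : Set (ℕ → A)) : Prop where
  nonempty : Ξ.Nonempty
  isClosed : IsClosed Ξ
  shift_mem : ∀ ξ ∈ Ξ, shift ξ ∈ Ξ

/-- Minimality: every orbit is dense in `Ξ`. -/
def IsMinimal [TopologicalSpace A] (Ξ : Set (ℕ → A)) : Prop :=
  ∀ ξ ∈ Ξ, Ξ ⊆ closure (Set.range fun n => shift^[n] ξ)

/-- Aperiodicity. -/
def Aperiodic (Ξ : Set (ℕ → A)) : Prop :=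
  ∀ ξ ∈ Ξ, ∀ n : ℕ, shift^[n] ξ = ξ → n = 0

/-! ### Occurrences, complete first returns, privileged words -/

variable [DecidableEq A]

/-- The number of occurrences of `u` as a factor of `w`. -/
def occCount (u w : List A) : ℕ :=
  ((List.range (w.length + 1)).filter fun k => (w.drop k).take u.length == u).length

/-- `u'` is a complete first return to `u`: if `u` is empty, `u'` is a single letter;
otherwise `u` is a prefix and a suffix of `u'` and occurs exactly twice in `u'`. -/
def IsCFR (u u' : List A) : Prop :=
  if u = [] then u'.length = 1
  else u <+: u' ∧ u <:+ u' ∧ occCount u u' = 2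

/-- Privileged words of order `n`. -/
inductive PrivOrder : ℕ → List A → Prop where
  | zero : PrivOrder 0 []
  | succ {n : ℕ} {u u' : List A} : PrivOrder n u → IsCFR u u' → PrivOrder (n + 1) u'

/-- A word is privileged if it is privileged of some order. -/
def IsPrivileged (u : List A) : Prop := ∃ n, PrivOrder n u

/-- `u'` is a complete first return to `u` inside the language `L`. -/
def CFRin (L : Set (List A)) (u u' : List A) : Prop := u' ∈ L ∧ IsCFR u u'

/-- `u` is right-special for the language `L`. -/
def RightSpecial (L : Set (List A)) (u : List A) : Prop :=
  u ∈ L ∧ ∃ a b : A, a ≠ b ∧ u ++ [a] ∈ L ∧ u ++ [b] ∈ L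

/-- `a(v)`: number of one-letter right extensions of `v` in `L`, minus one. -/
def aext (L : Set (List A)) (v : List A) : ℕ := Nat.card {a : A // v ++ [a] ∈ L} - 1

/-- `ã(v)`: number of complete first returns to `v` in `L`, minus one, if `v` is
privileged, and `0` otherwise. -/
def atil (L : Set (List A)) (v : List A) : ℕ :=
  if IsPrivileged v then Nat.card {u' : List A // CFRin L v u'} - 1 else 0

/-- `S(u)`: right-special words `r` with `u ⪯ r ≺ u'` for some complete first return `u'`. -/
def Sset (L : Set (List A)) (u : List A) : Set (List A) :=
  {r | RightSpecial L r ∧ ∃ u', CFRin L u u' ∧ u <+: r ∧ PPrefix r u'}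

/-- Right-special balanced: between a privileged word and any of its complete first
returns there is exactly one right-special word. -/
def RSBalanced (L : Set (List A)) : Prop :=
  ∀ u, IsPrivileged u → u ∈ L → ∀ u', CFRin L u u' →
    ∃! r, RightSpecial L r ∧ u <+: r ∧ PPrefix r u'

/-- `r'` is the shortest right-special word having `r` as a proper prefix. -/
def IsShortestRSExt (L : Set (List A)) (r r' : List A) : Prop :=
  RightSpecial L r' ∧ PPrefix r r' ∧
    ∀ r'', RightSpecial L r'' → PPrefix r r'' → r'.length ≤ r''.length

/-- `r = φ⁽⁰⁾(u)`: `r` is the shortest right-special word having `u` as a prefix. -/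
def IsPhi0 (L : Set (List A)) (u r : List A) : Prop :=
  RightSpecial L r ∧ u <+: r ∧ ∀ r', RightSpecial L r' → u <+: r' → r.length ≤ r'.length

/-- `H⁽¹⁾`: pairs of distinct one-letter right extensions of a common word. -/
def H1 (L : Set (List A)) (v₁ v₂ : List A) : Prop :=
  v₁ ∈ L ∧ v₂ ∈ L ∧ v₁ ≠ v₂ ∧ ∃ (w : List A) (a b : A), v₁ = w ++ [a] ∧ v₂ = w ++ [b]

/-- `H̃⁽¹⁾`: pairs of distinct complete first returns to a common privileged word. -/
def TildeH1 (L : Set (List A)) (u₁ u₂ : List A) : Prop :=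
  u₁ ≠ u₂ ∧ ∃ u, IsPrivileged u ∧ CFRin L u u₁ ∧ CFRin L u u₂

/-- Length of the longest common prefix of two finite words. -/
def lcpLenW (u v : List A) : ℕ := sSup {n | n ≤ u.length ∧ u.take n = v.take n}

/-- Length of the longest common privileged prefix of two finite words. -/
def weeLenW (u v : List A) : ℕ :=
  sSup {n | ∃ w : List A, IsPrivileged w ∧ w.length = n ∧ w <+: u ∧ w <+: v}

/-- `φ⁽¹⁾`: the pair of one-letter extensions of `u₁ ∧ u₂` which are prefixes of
`u₁` resp. `u₂`. -/
def phi1 (u₁ u₂ : List A) : List A × List A :=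
  (u₁.take (lcpLenW u₁ u₂ + 1), u₂.take (lcpLenW u₁ u₂ + 1))

/-! ### Bounded powers and repulsiveness -/

/-- Bounded powers: there is `p` such that no `(p+1)`-th power of a nonempty word
belongs to `L`. -/
def BoundedPowers (L : Set (List A)) : Prop :=
  ∃ p : ℕ, ∀ u ∈ L, u ≠ [] → wordPow u (p + 1) ∉ L

/-- The set of ratios `(|W|-|w|)/|w|` over words `w, W ∈ L` with `w` a nonempty proper
prefix and a suffix of `W`. -/
def repulsionSet (L : Set (List A)) : Set ℝ :=
  {x | ∃ w W : List A, w ∈ L ∧ W ∈ L ∧ w ≠ [] ∧ PPrefix w W ∧ w <:+ W ∧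
        x = ((W.length : ℝ) - (w.length : ℝ)) / (w.length : ℝ)}

/-- The index of repulsiveness `ℓ`. -/
def repulsionIndex (L : Set (List A)) : ℝ := sInf (repulsionSet L)

/-- Repulsive: `ℓ > 0`. -/
def Repulsive (L : Set (List A)) : Prop := 0 < repulsionIndex L

/-! ### Privileged prefixes of infinite words -/

/-- The `n`-th privileged prefix `ξ̃ₙ` of an infinite word `ξ`. -/
def privPrefix (ξ : ℕ → A) : ℕ → List A
  | 0 => []
  | n + 1 =>
    if h : ∃ u', IsCFR (privPrefix ξ n) u' ∧ PrefixOfInf u' ξ then h.choose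
    else privPrefix ξ n

/-- The order `ind(ξ ⩏ η)` of the longest common privileged prefix of two infinite
words; the word `ξ ⩏ η` itself is `privPrefix ξ (weeInd ξ η)`. -/
def weeInd (ξ η : ℕ → A) : ℕ := sSup {n | privPrefix ξ n = privPrefix η n}

/-- Length of the longest common prefix `ξ ∧ η` of two distinct infinite words. -/
def lcpLenInf (ξ η : ℕ → A) : ℕ := sInf {n | ξ n ≠ η n}

/-! ### Choice functions, weight functions and the metrics -/

/-- A choice function for `Ξ`. -/
def IsChoiceFun (Ξ : Set (ℕ → A)) (τ : List A → ℕ → A) : Prop :=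
  (∀ v ∈ language Ξ, τ v ∈ Ξ ∧ PrefixOfInf v (τ v)) ∧
  (∀ v ∈ language Ξ, ∀ w ∈ language Ξ, v.length < w.length →
    PrefixOfInf w (τ v) → τ w = τ v)

/-- A weight function. -/
structure IsWeight (δ : ℕ → ℝ) : Prop where
  pos : ∀ n, 0 < δ n
  strictAnti : StrictAnti δ
  tendsto_zero : Filter.Tendsto δ Filter.atTop (nhds 0)
  submul : ∃ c : ℝ, 0 < c ∧ ∀ a b : ℕ, δ (a * b) ≤ c * δ a * δ b
  doubling : ∃ c : ℝ, 0 < c ∧ ∀ a : ℕ, c * δ a ≤ δ (2 * a)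

variable [TopologicalSpace A]

/-- The metric `d_τ` associated to the right-special horizontal edges. -/
def dTau (Ξ : Set (ℕ → A)) (δ : ℕ → ℝ) (τ : List A → ℕ → A) (ξ η : ℕ → A) : ℝ≥0∞ :=
  ⨆ f : {f : (ℕ → A) → ℝ // ContinuousOn f Ξ ∧
      ∀ v₁ v₂, H1 (language Ξ) v₁ v₂ → |f (τ v₁) - f (τ v₂)| ≤ δ (lcpLenW v₁ v₂)},
    ENNReal.ofReal |f.1 ξ - f.1 η|

/-- The metric `d̃_τ` associated to the privileged horizontal edges. -/
def dTilTau (Ξ : Set (ℕ → A)) (δ : ℕ → ℝ) (τ : List A → ℕ → A) (ξ η : ℕ → A) : ℝ≥0∞ :=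
  ⨆ f : {f : (ℕ → A) → ℝ // ContinuousOn f Ξ ∧
      ∀ u₁ u₂, TildeH1 (language Ξ) u₁ u₂ → |f (τ u₁) - f (τ u₂)| ≤ δ (weeLenW u₁ u₂)},
    ENNReal.ofReal |f.1 ξ - f.1 η|

/-- `d_inf`. -/
def dInf (Ξ : Set (ℕ → A)) (δ : ℕ → ℝ) (ξ η : ℕ → A) : ℝ≥0∞ :=
  ⨅ τ : {τ // IsChoiceFun Ξ τ}, dTau Ξ δ τ.1 ξ η

/-- `d_sup`. -/
def dSup (Ξ : Set (ℕ → A)) (δ : ℕ → ℝ) (ξ η : ℕ → A) : ℝ≥0∞ :=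
  ⨆ τ : {τ // IsChoiceFun Ξ τ}, dTau Ξ δ τ.1 ξ η

/-- `d̃_inf`. -/
def dTilInf (Ξ : Set (ℕ → A)) (δ : ℕ → ℝ) (ξ η : ℕ → A) : ℝ≥0∞ :=
  ⨅ τ : {τ // IsChoiceFun Ξ τ}, dTilTau Ξ δ τ.1 ξ η

/-- `d̃_sup`. -/
def dTilSup (Ξ : Set (ℕ → A)) (δ : ℕ → ℝ) (ξ η : ℕ → A) : ℝ≥0∞ :=
  ⨆ τ : {τ // IsChoiceFun Ξ τ}, dTilTau Ξ δ τ.1 ξ η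

/-- `β̃_τ(ξ̃ₙ)`: equals `1` if the longest common privileged prefix of `τ(ξ̃ₙ)` and `ξ`
is `ξ̃ₙ`, and `0` otherwise. -/
def btil (τ : List A → ℕ → A) (ξ : ℕ → A) (n : ℕ) : ℝ≥0∞ :=
  if privPrefix (τ (privPrefix ξ n)) (weeInd (τ (privPrefix ξ n)) ξ) = privPrefix ξ n
  then 1 else 0

/-! ### Zeta functions -/

/-- `ζ_k(s)` (with the convention `0⁰ = 0`). -/
def zeta (L : Set (List A)) (δ : ℕ → ℝ) (k : ℕ) (s : ℝ) : ℝ≥0∞ :=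
  ∑' v : L, (if aext L (v : List A) = 0 then 0 else ((aext L (v : List A) : ℝ≥0∞)) ^ k) *
    ENNReal.ofReal (δ (v : List A).length ^ s)

/-- `ζ̃_k(s)` (with the convention `0⁰ = 0`). -/
def zetaTil (L : Set (List A)) (δ : ℕ → ℝ) (k : ℕ) (s : ℝ) : ℝ≥0∞ :=
  ∑' v : L, (if atil L (v : List A) = 0 then 0 else ((atil L (v : List A) : ℝ≥0∞)) ^ k) *
    ENNReal.ofReal (δ (v : List A).length ^ s)

/-- Almost finite privileged rank. -/
def AlmostFiniteRank (L : Set (List A)) : Prop :=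
  ∃ a b : ℝ, 0 < a ∧ 0 < b ∧ ∀ u, IsPrivileged u → u ∈ L → 2 ≤ u.length →
    (Nat.card {u' : List A // CFRin L u u'} : ℝ) ≤ a * (Real.log u.length) ^ b



/-! ### Auxiliary lemmas -/

section Aux

lemma factorAt_iff' {u : List A} {ξ : ℕ → A} {k : ℕ} :
    FactorAt u ξ k ↔ ∀ i (h : i < u.length), u[i] = ξ (k + i) := by
  constructor
  · intro h i hi
    rw [List.getElem_of_eq h hi]; simp
  · intro h
    apply List.ext_getElem (by simp)
    intro i hi _
    simp [h i hi]

lemma factorAt_nil' (ξ : ℕ → A) (k : ℕ) : FactorAt ([] : List A) ξ k := by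
  simp [FactorAt]

lemma factorAt_infix' {w s v t : List A} {ξ : ℕ → A} {k : ℕ}
    (hw : FactorAt w ξ k) (he : w = s ++ (v ++ t)) : FactorAt v ξ (k + s.length) := by
  rw [factorAt_iff'] at hw ⊢
  intro i hi
  have hlen : s.length + i < w.length := by
    subst he; simp only [List.length_append]; omega
  have h1 := hw (s.length + i) hlen
  have h2 : w[s.length + i]'hlen = v[i] := by
    rw [List.getElem_of_eq he hlen]
    rw [List.getElem_append_right (by omega)]
    simp only [Nat.add_sub_cancel_left]
    rw [List.getElem_append_left hi]
  rw [← h2, h1]; ring_nf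

lemma mem_language_of_infix' {Ξ : Set (ℕ → A)} {v w : List A}
    (h : v <:+: w) (hw : w ∈ language Ξ) : v ∈ language Ξ := by
  obtain ⟨ξ, hξ, k, hk⟩ := hw
  obtain ⟨s, t, rfl⟩ := h
  exact ⟨ξ, hξ, k + s.length, factorAt_infix' hk (List.append_assoc s v t)⟩

lemma factorAt_snoc' {q : List A} {ξ : ℕ → A} {k : ℕ} (h : FactorAt q ξ k) :
    FactorAt (q ++ [ξ (k + q.length)]) ξ k := by
  rw [factorAt_iff'] at h ⊢
  intro i hi
  rcases lt_or_ge i q.length with h' | h'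
  · rw [List.getElem_append_left h']; exact h i h'
  · have hie : i = q.length := by simp at hi; omega
    subst hie
    rw [List.getElem_append_right (le_refl _)]
    simp

lemma shift_iterate' (ξ : ℕ → A) (m n : ℕ) : shift^[m] ξ n = ξ (n + m) := by
  induction m generalizing ξ with
  | zero => rfl
  | succ m ih =>
    rw [Function.iterate_succ_apply, ih]
    simp only [shift]; ring_nf

lemma iter_shift_mem' [TopologicalSpace A] {Ξ : Set (ℕ → A)} (hΞ : IsSubshift Ξ)
    {ξ : ℕ → A} (hξ : ξ ∈ Ξ) : ∀ k, shift^[k] ξ ∈ Ξ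
  | 0 => hξ
  | k + 1 => by
    rw [Function.iterate_succ_apply']
    exact hΞ.shift_mem _ (iter_shift_mem' hΞ hξ k)

lemma occ_length_le' {u w : List A} (hu : u ≠ []) {k : ℕ}
    (h : (w.drop k).take u.length = u) : k + u.length ≤ w.length := by
  have hl := congrArg List.length h
  simp only [List.length_take, List.length_drop] at hl
  have hu0 : u.length ≠ 0 := by simpa using hu
  omega

lemma three_occ_contra' {u w : List A} {k1 k2 k3 : ℕ}
    (h2 : occCount u w = 2)
    (h12 : k1 ≠ k2) (h13 : k1 ≠ k3) (h23 : k2 ≠ k3)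
    (m1 : k1 ≤ w.length) (m2 : k2 ≤ w.length) (m3 : k3 ≤ w.length)
    (o1 : (w.drop k1).take u.length = u) (o2 : (w.drop k2).take u.length = u)
    (o3 : (w.drop k3).take u.length = u) : False := by
  set l := (List.range (w.length + 1)).filter
      (fun k => (w.drop k).take u.length == u) with hl
  have hmem : ∀ k, k ≤ w.length → (w.drop k).take u.length = u → k ∈ l := by
    intro k hk ho
    rw [hl, List.mem_filter]
    exact ⟨List.mem_range.2 (by omega), by simpa using ho⟩
  have hnd : l.Nodup := List.nodup_range.filter _
  have hsub : ({k1, k2, k3} : Finset ℕ) ⊆ l.toFinset := by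
    intro x hx
    simp only [Finset.mem_insert, Finset.mem_singleton] at hx
    rcases hx with rfl | rfl | rfl
    · exact List.mem_toFinset.2 (hmem _ m1 o1)
    · exact List.mem_toFinset.2 (hmem _ m2 o2)
    · exact List.mem_toFinset.2 (hmem _ m3 o3)
  have hcard : ({k1, k2, k3} : Finset ℕ).card = 3 := by
    rw [Finset.card_insert_of_notMem (by simp [h12, h13]),
      Finset.card_insert_of_notMem (by simp [h23]), Finset.card_singleton]
  have hle := Finset.card_le_card hsub
  rw [hcard, List.toFinset_card_of_nodup hnd] at hle
  have hocc : occCount u w = l.length := by rw [hl]; rfl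
  omega

lemma length_lt_of_occCount_two' {u w : List A} (hu : u ≠ [])
    (hpre : u <+: w) (h2 : occCount u w = 2) : u.length < w.length := by
  by_contra hle
  push_neg at hle
  have hlen : u.length = w.length := le_antisymm hpre.length_le hle
  set l := (List.range (w.length + 1)).filter
      (fun k => (w.drop k).take u.length == u) with hl
  have hall : ∀ k ∈ l, k = 0 := by
    intro k hk
    rw [hl, List.mem_filter] at hk
    have ho : (w.drop k).take u.length = u := by
      have := hk.2; simpa using this
    have := occ_length_le' hu ho
    omega
  have hnd : l.Nodup := List.nodup_range.filter _
  have hsub : l.toFinset ⊆ {0} := by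
    intro x hx
    simp only [Finset.mem_singleton]
    exact hall x (List.mem_toFinset.1 hx)
  have hle2 := Finset.card_le_card hsub
  rw [List.toFinset_card_of_nodup hnd, Finset.card_singleton] at hle2
  have hocc : occCount u w = l.length := by rw [hl]; rfl
  omega

lemma forced_factor' [TopologicalSpace A] {Ξ : Set (ℕ → A)} {u u' : List A}
    (hu'L : u' ∈ language Ξ) (hpre : u <+: u')
    (hnors : ∀ m, u.length ≤ m → m < u'.length → ¬ RightSpecial (language Ξ) (u'.take m))
    {ξ : ℕ → A} {k : ℕ} (hξ : ξ ∈ Ξ) (hocc : FactorAt u ξ k) : FactorAt u' ξ k := by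
  have key : ∀ m, u.length ≤ m → m ≤ u'.length → FactorAt (u'.take m) ξ k := by
    intro m hm
    induction m, hm using Nat.le_induction with
    | base =>
      intro _
      have : u'.take u.length = u := (List.prefix_iff_eq_take.1 hpre).symm
      rwa [this]
    | succ m hm ih =>
      intro hm1
      have hmlt : m < u'.length := hm1
      have hq := ih (le_of_lt hmlt)
      have hqlen : (u'.take m).length = m := by
        rw [List.length_take]; omega
      have hqpre : u'.take m <+: u' := List.take_prefix _ _
      have hqL : u'.take m ∈ language Ξ := mem_language_of_infix' hqpre.isInfix hu'L
      have haL : u'.take m ++ [ξ (k + m)] ∈ language Ξ := by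
        refine ⟨ξ, hξ, k, ?_⟩
        have h' := factorAt_snoc' hq
        rwa [hqlen] at h'
      have htake : u'.take (m + 1) = u'.take m ++ [u'[m]] := by
        rw [List.take_succ, List.getElem?_eq_getElem hmlt]
        rfl
      have hbL : u'.take m ++ [u'[m]] ∈ language Ξ := by
        rw [← htake]
        exact mem_language_of_infix' (List.take_prefix _ _).isInfix hu'L
      have heq : ξ (k + m) = u'[m] := by
        by_contra hne
        exact hnors m hm hmlt ⟨hqL, ξ (k + m), u'[m], hne, haL, hbL⟩
      rw [htake, ← heq]
      have h' := factorAt_snoc' hq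
      rwa [hqlen] at h'
  have hfin := key u'.length hpre.length_le le_rfl
  rwa [List.take_length] at hfin

lemma no_rs_contra' [TopologicalSpace A] {Ξ : Set (ℕ → A)} (hΞ : IsSubshift Ξ)
    (hap : Aperiodic Ξ) {u u' : List A} (hu : u ≠ []) (hu'L : u' ∈ language Ξ)
    (hpre : u <+: u') (hsuf : u <:+ u') (hlt : u.length < u'.length)
    (hnors : ∀ m, u.length ≤ m → m < u'.length → ¬ RightSpecial (language Ξ) (u'.take m))
    (huL : u ∈ language Ξ) : False := by
  obtain ⟨ξ, hξ, k, hk⟩ := huL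
  obtain ⟨c, hc⟩ := hsuf
  have hplen : c.length + u.length = u'.length := by rw [← hc]; simp
  have hppos : 0 < c.length := by omega
  have hupos : 0 < u.length := List.length_pos_iff.2 hu
  have hall : ∀ n, FactorAt u ξ (k + n * c.length) := by
    intro n
    induction n with
    | zero => simpa using hk
    | succ n ih =>
      have h' : FactorAt u' ξ (k + n * c.length) := forced_factor' hu'L hpre hnors hξ ih
      have h2 := factorAt_infix' h' (show u' = c ++ (u ++ []) by
        rw [List.append_nil]; exact hc.symm)
      have he : k + (n + 1) * c.length = k + n * c.length + c.length := by ring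
      rwa [he]
  have hall' : ∀ n, FactorAt u' ξ (k + n * c.length) :=
    fun n => forced_factor' hu'L hpre hnors hξ (hall n)
  set p := c.length with hp
  have hper : ∀ i, ξ (k + i + p) = ξ (k + i) := by
    intro i
    have hmod : i % p < p := Nat.mod_lt i hppos
    have hdm : p * (i / p) + i % p = i := Nat.div_add_mod i p
    have h1 := (factorAt_iff'.1 (hall' (i / p))) (i % p) (by omega)
    have h2 := (factorAt_iff'.1 (hall' (i / p + 1))) (i % p) (by omega)
    have hx : (i / p + 1) * p = i / p * p + p := by ring
    have hy : i / p * p = p * (i / p) := by ring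
    have e1 : k + i / p * p + i % p = k + i := by omega
    have e2 : k + (i / p + 1) * p + i % p = k + i + p := by omega
    rw [e1] at h1
    rw [e2] at h2
    rw [← h1, ← h2]
  have hmem : shift^[k] ξ ∈ Ξ := iter_shift_mem' hΞ hξ k
  have hfix : shift^[p] (shift^[k] ξ) = shift^[k] ξ := by
    funext i
    rw [shift_iterate', shift_iterate', shift_iterate']
    have e3 : i + p + k = k + i + p := by ring
    have e4 : i + k = k + i := by ring
    rw [e3, e4, hper i]
  have := hap _ hmem p hfix
  omega

end Aux

/-- A minimal and aperiodic right-infinite subshift over a finite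
alphabet with a unique right-special word per length is right-special balanced. -/
theorem statement5 {A : Type*} [Fintype A] [DecidableEq A] [TopologicalSpace A]
    [DiscreteTopology A] (Ξ : Set (ℕ → A)) (hΞ : IsSubshift Ξ) (hmin : IsMinimal Ξ)
    (hap : Aperiodic Ξ)
    (huniq : ∀ n : ℕ, ∃! r, RightSpecial (language Ξ) r ∧ r.length = n) :
    RSBalanced (language Ξ) := by
  classical
  intro u _hpriv huL u' hcfru'
  obtain ⟨hu'L, hcfr⟩ := hcfru'
  by_cases hnil : u = []
  · subst hnil
    rw [IsCFR, if_pos rfl] at hcfr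
    have hne' : u' ≠ [] := by
      intro h; rw [h] at hcfr; simp at hcfr
    have hnilL : ([] : List A) ∈ language Ξ := by
      obtain ⟨ξ0, hξ0⟩ := hΞ.nonempty
      exact ⟨ξ0, hξ0, 0, factorAt_nil' ξ0 0⟩
    have hrs : RightSpecial (language Ξ) [] := by
      refine ⟨hnilL, ?_⟩
      by_contra hcon
      simp only [not_exists, not_and, List.nil_append] at hcon
      obtain ⟨ξ0, hξ0⟩ := hΞ.nonempty
      have hletter : ∀ i, [ξ0 i] ∈ language Ξ := by
        intro i
        refine ⟨ξ0, hξ0, i, ?_⟩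
        simp [FactorAt, List.range_succ]
      have hconst : ∀ i, ξ0 i = ξ0 0 := by
        intro i
        by_contra hne
        exact hcon (ξ0 i) (ξ0 0) hne (hletter i) (hletter 0)
      have hfix : shift^[1] ξ0 = ξ0 := by
        funext n
        rw [shift_iterate']
        rw [hconst (n + 1), hconst n]
      have := hap ξ0 hξ0 1 hfix
      omega
    refine ⟨[], ⟨hrs, List.nil_prefix, List.nil_prefix, fun h => hne' h.symm⟩, ?_⟩
    rintro r ⟨_, _, hrp, hrne⟩
    have hle := hrp.length_le
    have : r.length ≠ u'.length := fun h => hrne (hrp.eq_of_length h)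
    have : r.length = 0 := by omega
    exact List.length_eq_zero_iff.1 this
  · rw [IsCFR, if_neg hnil] at hcfr
    obtain ⟨hpre, hsuf, hocc2⟩ := hcfr
    have hupos : 0 < u.length := List.length_pos_iff.2 hnil
    have hlt : u.length < u'.length := length_lt_of_occCount_two' hnil hpre hocc2
    have hex : ∃ r, RightSpecial (language Ξ) r ∧ u <+: r ∧ PPrefix r u' := by
      by_contra hno
      push_neg at hno
      have hnors : ∀ m, u.length ≤ m → m < u'.length →
          ¬ RightSpecial (language Ξ) (u'.take m) := by
        intro m hm hmlt hrs
        have h1 : u <+: u'.take m := by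
          rw [List.prefix_iff_eq_take, List.take_take, min_eq_left hm]
          exact List.prefix_iff_eq_take.1 hpre
        have h2 : u'.take m ≠ u' := by
          intro h
          have := congrArg List.length h
          rw [List.length_take] at this
          omega
        exact hno (u'.take m) hrs h1 ⟨List.take_prefix _ _, h2⟩
      exact no_rs_contra' hΞ hap hnil hu'L hpre hsuf hlt hnors huL
    obtain ⟨r, hr⟩ := hex
    have Hu : ∀ r1 r2 : List A,
        (RightSpecial (language Ξ) r1 ∧ u <+: r1 ∧ PPrefix r1 u') →
        (RightSpecial (language Ξ) r2 ∧ u <+: r2 ∧ PPrefix r2 u') →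
        r1.length ≤ r2.length → r1 = r2 := by
      rintro r1 r2 ⟨hrs1, hu1, hp1⟩ ⟨hrs2, hu2, hp2⟩ hlen
      rcases eq_or_lt_of_le hlen with heq | hlt2
      · exact (huniq r1.length).unique ⟨hrs1, rfl⟩ ⟨hrs2, heq.symm⟩
      · exfalso
        have hssuf : r2.drop (r2.length - r1.length) <:+ r2 := List.drop_suffix _ _
        have hslen : (r2.drop (r2.length - r1.length)).length = r1.length := by
          rw [List.length_drop]; omega
        have hsrs : RightSpecial (language Ξ) (r2.drop (r2.length - r1.length)) := by
          obtain ⟨hr2L, a, b, hab, haL, hbL⟩ := hrs2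
          obtain ⟨c, hc⟩ := hssuf
          refine ⟨mem_language_of_infix' (List.drop_suffix _ _).isInfix hr2L, a, b, hab, ?_, ?_⟩
          · exact mem_language_of_infix'
              (List.IsSuffix.isInfix ⟨c, by rw [← List.append_assoc, hc]⟩) haL
          · exact mem_language_of_infix'
              (List.IsSuffix.isInfix ⟨c, by rw [← List.append_assoc, hc]⟩) hbL
        have hs1 : r2.drop (r2.length - r1.length) = r1 :=
          (huniq r1.length).unique ⟨hsrs, hslen⟩ ⟨hrs1, rfl⟩
        have hdlen : (r2.take (r2.length - r1.length)).length = r2.length - r1.length := by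
          rw [List.length_take]; omega
        have hd2 : r2.take (r2.length - r1.length) ++ r1 = r2 := by
          nth_rewrite 2 [← hs1]
          exact List.take_append_drop _ _
        obtain ⟨z, hz⟩ := hp2.1
        have hr2lt : r2.length < u'.length := by
          have h1 := hp2.1.length_le
          have h2 : r2.length ≠ u'.length := fun h => hp2.2 (hp2.1.eq_of_length h)
          omega
        have hr1u : u.length ≤ r1.length := hu1.length_le
        -- occurrence at 0
        have hocc0 : (u'.drop 0).take u.length = u := by
          rw [List.drop_zero]
          exact (List.prefix_iff_eq_take.1 hpre).symm
        -- occurrence at d.length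
        have hoccd : (u'.drop (r2.length - r1.length)).take u.length = u := by
          have hu' : u' = r2.take (r2.length - r1.length) ++ (r1 ++ z) := by
            rw [← List.append_assoc, hd2, hz]
          rw [hu', List.drop_left' hdlen, List.take_append,
            Nat.sub_eq_zero_of_le hr1u, List.take_zero, List.append_nil]
          exact (List.prefix_iff_eq_take.1 hu1).symm
        -- occurrence at u'.length - u.length
        obtain ⟨c2, hc2⟩ := hsuf
        have hc2len : c2.length = u'.length - u.length := by
          have := congrArg List.length hc2
          simp only [List.length_append] at this
          omega
        have hoccq : (u'.drop (u'.length - u.length)).take u.length = u := by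
          rw [← hc2len, ← hc2, List.drop_left, List.take_length]
        exact three_occ_contra' hocc2
          (by omega : (0 : ℕ) ≠ r2.length - r1.length)
          (by omega : (0 : ℕ) ≠ u'.length - u.length)
          (by omega : r2.length - r1.length ≠ u'.length - u.length)
          (by omega) (by omega) (by omega) hocc0 hoccd hoccq
    refine ⟨r, hr, ?_⟩
    intro r2 hr2
    rcases le_total r2.length r.length with h | h
    · exact Hu r2 r hr2 hr h
    · exact (Hu r r2 hr hr2 h).symm


end Arx1111
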